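/- The derivative of ε̇ ↦ (P/2)Δ(ε̇) at ε̇ in direction φ equals (2η ε̇'(ε̇) + ζ tr(ε̇) I) : φ, where ζ = P/(2Δ(ε̇)) and η = e^{-2}ζ, for symmetric directions φ. -/

import Mathlib

noncomputable def frob (a b : Matrix (Fin 2) (Fin 2) ℝ) : ℝ := ∑ i, ∑ j, a i j * b i j

noncomputable def dev (a : Matrix (Fin 2) (Fin 2) ℝ) : Matrix (Fin 2) (Fin 2) ℝ :=
  a - (Matrix.trace a / 2) • (1 : Matrix (Fin 2) (Fin 2) ℝ)

noncomputable def delta (e Δmin : ℝ) (ε : Matrix (Fin 2) (Fin 2) ℝ) : ℝ :=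
  Real.sqrt (2 * (e ^ 2)⁻¹ * frob (dev ε) (dev ε) + (Matrix.trace ε) ^ 2 + Δmin ^ 2)

lemma frob_add_left (a b c : Matrix (Fin 2) (Fin 2) ℝ) :
    frob (a + b) c = frob a c + frob b c := by
  simp [frob, Fin.sum_univ_two, Matrix.add_apply]; ring

lemma frob_add_right (a b c : Matrix (Fin 2) (Fin 2) ℝ) :
    frob a (b + c) = frob a b + frob a c := by
  simp [frob, Fin.sum_univ_two, Matrix.add_apply]; ring

lemma frob_smul_left (s : ℝ) (a b : Matrix (Fin 2) (Fin 2) ℝ) :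
    frob (s • a) b = s * frob a b := by
  simp [frob, Fin.sum_univ_two, Matrix.smul_apply, smul_eq_mul]; ring

lemma frob_smul_right (s : ℝ) (a b : Matrix (Fin 2) (Fin 2) ℝ) :
    frob a (s • b) = s * frob a b := by
  simp [frob, Fin.sum_univ_two, Matrix.smul_apply, smul_eq_mul]; ring

lemma frob_comm (a b : Matrix (Fin 2) (Fin 2) ℝ) : frob a b = frob b a := by
  simp [frob, Fin.sum_univ_two]; ring

lemma frob_one_right (a : Matrix (Fin 2) (Fin 2) ℝ) : frob a 1 = Matrix.trace a := by
  simp [frob, Fin.sum_univ_two, Matrix.one_apply, Matrix.trace_fin_two]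

lemma frob_one_left (a : Matrix (Fin 2) (Fin 2) ℝ) : frob 1 a = Matrix.trace a := by
  rw [frob_comm, frob_one_right]

lemma frob_self_nonneg (a : Matrix (Fin 2) (Fin 2) ℝ) : 0 ≤ frob a a := by
  simp only [frob, Fin.sum_univ_two, ← sq]
  positivity

lemma trace_dev (a : Matrix (Fin 2) (Fin 2) ℝ) : Matrix.trace (dev a) = 0 := by
  simp [dev, Matrix.trace_fin_two, Matrix.sub_apply, Matrix.smul_apply, Matrix.one_apply]

lemma frob_dev_one (a : Matrix (Fin 2) (Fin 2) ℝ) : frob (dev a) 1 = 0 := by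
  rw [frob_one_right, trace_dev]

lemma dev_add_smul (a b : Matrix (Fin 2) (Fin 2) ℝ) (s : ℝ) :
    dev (a + s • b) = dev a + s • dev b := by
  simp only [dev, Matrix.trace_add, Matrix.trace_smul, smul_eq_mul]
  ext i j
  simp [Matrix.add_apply, Matrix.sub_apply, Matrix.smul_apply, smul_eq_mul]
  ring

lemma frob_dev_right (a b : Matrix (Fin 2) (Fin 2) ℝ) :
    frob (dev a) (dev b) = frob (dev a) b := by
  have : dev b = b + (-(Matrix.trace b / 2)) • (1 : Matrix (Fin 2) (Fin 2) ℝ) := by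
    simp [dev, sub_eq_add_neg, neg_smul]
  rw [this, frob_add_right, frob_smul_right, frob_dev_one]
  ring

theorem stress_derivative (e Δmin P : ℝ) (he : 0 < e) (hΔ : 0 < Δmin)
    (ε φ : Matrix (Fin 2) (Fin 2) ℝ) (hε : ε.transpose = ε) (hφ : φ.transpose = φ)
    (ζ η : ℝ) (hζ : ζ = P / (2 * delta e Δmin ε)) (hη : η = (e ^ 2)⁻¹ * ζ) :
    HasDerivAt (fun s : ℝ => (P / 2) * delta e Δmin (ε + s • φ))
      (frob ((2 * η) • dev ε + (ζ * Matrix.trace ε) • (1 : Matrix (Fin 2) (Fin 2) ℝ)) φ)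
      0 := by
  set A := frob (dev ε) (dev ε) with hA
  set B := frob (dev ε) (dev φ) with hB
  set C := frob (dev φ) (dev φ) with hC
  set T := Matrix.trace ε with hT
  set U := Matrix.trace φ with hU
  set c0 : ℝ := 2 * (e ^ 2)⁻¹ * A + T ^ 2 + Δmin ^ 2 with hc0
  set c1 : ℝ := 2 * (e ^ 2)⁻¹ * (2 * B) + 2 * T * U with hc1
  set c2 : ℝ := 2 * (e ^ 2)⁻¹ * C + U ^ 2 with hc2
  clear_value A B C T U c0 c1 c2
  have hq : ∀ s : ℝ,
      2 * (e ^ 2)⁻¹ * frob (dev (ε + s • φ)) (dev (ε + s • φ))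
        + (Matrix.trace (ε + s • φ)) ^ 2 + Δmin ^ 2
      = c0 + c1 * s + c2 * s ^ 2 := by
    intro s
    rw [dev_add_smul, frob_add_left, frob_add_right, frob_add_right,
      frob_smul_left, frob_smul_left, frob_smul_right, frob_smul_right,
      Matrix.trace_add, Matrix.trace_smul]
    have : frob (dev φ) (dev ε) = B := by rw [frob_comm]; exact hB.symm
    rw [this]
    simp only [smul_eq_mul, hc0, hc1, hc2, ← hA, ← hB, ← hC, ← hT, ← hU]
    ring
  have hc0pos : 0 < c0 := by
    rw [hc0]
    have h1 : 0 ≤ A := hA ▸ frob_self_nonneg _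
    have h2 : 0 ≤ 2 * (e ^ 2)⁻¹ * A := by positivity
    have h3 : 0 ≤ T ^ 2 := sq_nonneg _
    have h4 : 0 < Δmin ^ 2 := by positivity
    linarith
  have hΔε : delta e Δmin ε = Real.sqrt c0 := by
    simp [delta, hc0, hA, hT]
  have hΔpos : 0 < delta e Δmin ε := by
    rw [hΔε]; exact Real.sqrt_pos.mpr hc0pos
  -- derivative of the inner quadratic
  have hpoly : HasDerivAt (fun s : ℝ => c0 + c1 * s + c2 * s ^ 2) c1 0 := by
    have h := ((hasDerivAt_const (0:ℝ) c0).add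
      ((hasDerivAt_id (0:ℝ)).const_mul c1)).add
      (((hasDerivAt_pow 2 (0:ℝ))).const_mul c2)
    simpa [Pi.add_def] using h
  have h0 : c0 + c1 * 0 + c2 * 0 ^ 2 = c0 := by ring
  have hsqrt := hpoly.sqrt (by rw [h0]; exact ne_of_gt hc0pos)
  rw [h0] at hsqrt
  have hfinal : HasDerivAt (fun s : ℝ => (P / 2) * delta e Δmin (ε + s • φ))
      ((P / 2) * (c1 / (2 * Real.sqrt c0))) 0 := by
    have := hsqrt.const_mul (P / 2)
    refine this.congr_of_eventuallyEq ?_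
    filter_upwards with s
    simp only [delta, hq s]
  convert hfinal using 1
  rw [frob_add_left, frob_smul_left, frob_smul_left, frob_one_left,
    ← frob_dev_right, ← hB, ← hU]
  have hΔne : Real.sqrt c0 ≠ 0 := by
    rw [← hΔε]; exact ne_of_gt hΔpos
  rw [hΔε] at hζ
  rw [hζ] at hη
  rw [hη, hζ, hc1]
  have hene : e ≠ 0 := ne_of_gt he
  field_simp
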